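/- Let k be an algebraically closed field and m ≥ 1. Let a ∈ k[u₁,…,u_m] be such that the affine hypersurface a = 0 is nonsingular, i.e. for every q ∈ kᵐ with a(q) = 0 there is an index i with ∂a/∂u_i(q) ≠ 0. Let f ∈ k[u₁,…,u_m,x,y,z] belong to the ideal (x,y,z), and set F := a + f. Then F = 0 has no singular point on the locus x = y = z = 0: for every q ∈ kᵐ with F(q,0,0,0) = 0, some partial derivative of F (with respect to one of u₁,…,u_m, x, y, z) is nonzero at (q,0,0,0). (This is the affine-chart content of the second assertion of Lemma 6.4: the hypersurface X defined by a(u)w³ + f(u,x,y,z) = 0 is nonsingular along X ∖ X° = (x = y = z = 0) provided the hypersurface a = 0 is nonsingular.) -/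

import Mathlib

open MvPolynomial

/-- Lemma 6.4, second assertion (affine chart): if the affine hypersurface
`a = 0` in `kᵐ` is nonsingular and `f ∈ (x,y,z)`, then the hypersurface
`F = a + f = 0` in `k[u₁,…,u_m,x,y,z]` has no singular point on the locus
`x = y = z = 0`. -/
theorem nonsingular_along_xyz_eq_zero
    {k : Type*} [Field k] [IsAlgClosed k] {m : ℕ} (hm : 1 ≤ m)
    (a : MvPolynomial (Fin m) k)
    (ha : ∀ q : Fin m → k, eval q a = 0 → ∃ i : Fin m, eval q (pderiv i a) ≠ 0)
    (f : MvPolynomial (Fin m ⊕ Fin 3) k)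
    -- variables: `Sum.inl i = uᵢ`, `Sum.inr 0 = x`, `Sum.inr 1 = y`, `Sum.inr 2 = z`
    (hf : f ∈ Ideal.span {(X (Sum.inr 0) : MvPolynomial (Fin m ⊕ Fin 3) k),
        X (Sum.inr 1), X (Sum.inr 2)})
    (F : MvPolynomial (Fin m ⊕ Fin 3) k)
    (hF : F = rename Sum.inl a + f) :
    ∀ q : Fin m → k,
      eval (Sum.elim q ![0, 0, 0]) F = 0 →
      ∃ v : Fin m ⊕ Fin 3, eval (Sum.elim q ![0, 0, 0]) (pderiv v F) ≠ 0 := by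
  intro q hq
  set pt : Fin m ⊕ Fin 3 → k := Sum.elim q ![0, 0, 0] with hptdef
  have hpt : ∀ j : Fin 3, pt (Sum.inr j) = 0 := by
    intro j; fin_cases j <;> simp [hptdef]
  have key : ∀ i : Fin m, eval pt f = 0 ∧ eval pt (pderiv (Sum.inl i) f) = 0 := by
    intro i
    refine Submodule.span_induction ?_ ?_ ?_ ?_ hf
    · rintro p hp
      simp only [Set.mem_insert_iff, Set.mem_singleton_iff] at hp
      rcases hp with rfl | rfl | rfl <;>
        refine ⟨by simp [hpt], ?_⟩ <;>
        · rw [pderiv_X]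
          rw [Pi.single_eq_of_ne (by simp)]
          simp
    · simp
    · rintro p r _ _ ⟨h1, h2⟩ ⟨h3, h4⟩
      exact ⟨by simp [h1, h3], by simp [h2, h4]⟩
    · rintro c p _ ⟨h1, h2⟩
      refine ⟨by simp [smul_eq_mul, h1], ?_⟩
      simp [smul_eq_mul, pderiv_mul, h1, h2]
  have hfa : eval pt (rename Sum.inl a) = eval q a := by
    rw [eval_rename]
    congr 1
  have haz : eval q a = 0 := by
    rw [hF] at hq
    simp only [map_add, hfa, (key ⟨0, hm⟩).1, add_zero] at hq
    exact hq
  obtain ⟨i, hi⟩ := ha q haz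
  refine ⟨Sum.inl i, ?_⟩
  rw [hF]
  rw [map_add, map_add, pderiv_rename Sum.inl_injective, eval_rename]
  have hcomp : pt ∘ Sum.inl = q := rfl
  simpa [(key i).2, hcomp] using hi
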